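/- Let n ≥ 1, let r, r_1, …, r_n be positive integers, let r' be a nonnegative integer, and let c_1, …, c_n be integers satisfying the chain relations c_i r_i = r_{i-1} + r_{i+1} for i = 1, …, n, where r_0 := r and r_{n+1} := r'. Then gcd(r, r_1) = gcd(r_1, r_2) = … = gcd(r_{n-1}, r_n) = gcd(r_n, r'). In particular, in the terminal case r' = 0 one has gcd(r, r_1) = r_n, and r_n divides r_i for every i = 1, …, n. -/

import Mathlib

private lemma int_gcd_add_mul_right_right (a b k : ℤ) :
    Int.gcd a (b + k * a) = Int.gcd a b := by
  apply Nat.dvd_antisymm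
  · rw [← Int.natCast_dvd_natCast]
    refine Int.dvd_coe_gcd (Int.gcd_dvd_left _ _) ?_
    have h1 : (Int.gcd a (b + k * a) : ℤ) ∣ b + k * a := Int.gcd_dvd_right _ _
    have h2 : (Int.gcd a (b + k * a) : ℤ) ∣ k * a := Dvd.dvd.mul_left (Int.gcd_dvd_left _ _) k
    simpa using dvd_sub h1 h2
  · rw [← Int.natCast_dvd_natCast]
    refine Int.dvd_coe_gcd (Int.gcd_dvd_left _ _) ?_
    exact dvd_add (Int.gcd_dvd_right _ _) (Dvd.dvd.mul_left (Int.gcd_dvd_left _ _) k)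

/-- **Constancy of consecutive gcds along a chain of an arithmetical graph.**
Here `ρ 0 = r`, `ρ i = r_i` for `1 ≤ i ≤ n`, and `ρ (n+1) = r'`; the chain relations
coming from `MR = 0` read `c i * ρ i = ρ (i-1) + ρ (i+1)`.  All consecutive gcds
along the chain are equal; in the terminal case `r' = 0` one has
`gcd (r, r₁) = r_n` and `r_n` divides every `r_i`. -/
theorem chain_consecutive_gcds_constant (n : ℕ) (hn : 1 ≤ n) (ρ : ℕ → ℤ) (c : ℕ → ℤ)
    (hpos : ∀ i ≤ n, 0 < ρ i) (hlast : 0 ≤ ρ (n + 1))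
    (hrel : ∀ i, 1 ≤ i → i ≤ n → c i * ρ i = ρ (i - 1) + ρ (i + 1)) :
    (∀ i, 1 ≤ i → i ≤ n → Int.gcd (ρ (i - 1)) (ρ i) = Int.gcd (ρ i) (ρ (i + 1))) ∧
    (ρ (n + 1) = 0 →
      (Int.gcd (ρ 0) (ρ 1) : ℤ) = ρ n ∧ ∀ i, 1 ≤ i → i ≤ n → ρ n ∣ ρ i) := by
  have step : ∀ i, 1 ≤ i → i ≤ n →
      Int.gcd (ρ (i - 1)) (ρ i) = Int.gcd (ρ i) (ρ (i + 1)) := by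
    intro i hi1 hi2
    have h := hrel i hi1 hi2
    have hρ : ρ (i + 1) = -ρ (i - 1) + c i * ρ i := by linarith
    rw [hρ, int_gcd_add_mul_right_right (ρ i) (-ρ (i - 1)) (c i), Int.gcd_comm]
    simp [Int.gcd]
  -- constancy of g i := gcd (ρ i) (ρ (i+1))
  have const : ∀ i, i ≤ n → Int.gcd (ρ 0) (ρ 1) = Int.gcd (ρ i) (ρ (i + 1)) := by
    intro i
    induction i with
    | zero => intro _; rfl
    | succ k ih =>
      intro hk
      have hk' : k ≤ n := Nat.le_of_succ_le hk
      have := step (k + 1) (Nat.succ_le_succ (Nat.zero_le k)) hk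
      simpa using (ih hk').trans this
  refine ⟨step, fun h0 => ?_⟩
  have hgn : Int.gcd (ρ 0) (ρ 1) = Int.gcd (ρ n) (ρ (n + 1)) := const n le_rfl
  have hρn : 0 < ρ n := hpos n le_rfl
  have hg : (Int.gcd (ρ 0) (ρ 1) : ℤ) = ρ n := by
    rw [hgn, h0, Int.gcd_zero_right, Int.natAbs_of_nonneg hρn.le]
  refine ⟨hg, fun i hi1 hi2 => ?_⟩
  have h1 : Int.gcd (ρ 0) (ρ 1) = Int.gcd (ρ (i - 1)) (ρ i) := by
    have := const (i - 1) (le_trans (Nat.sub_le i 1) hi2)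
    rwa [Nat.sub_add_cancel hi1] at this
  have : (Int.gcd (ρ (i - 1)) (ρ i) : ℤ) ∣ ρ i := Int.gcd_dvd_right _ _
  rwa [← h1, hg] at this
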